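/- The braid group B₃ = ⟨b, c | b³ = c²⟩ acts on the universal double affine Hecke algebra Ĥ of type (C₁^∨, C₁) by algebra automorphisms, where b acts by t₀^∨ ↦ t₁^{-1} t₁^∨ t₁, t₀ ↦ t₀^∨, t₁^∨ ↦ t₀, t₁ ↦ t₁, c acts by t₀^∨ ↦ t₁^{-1} t₁^∨ t₁, t₀ ↦ t₀^∨ t₀ (t₀^∨)^{-1}, t₁^∨ ↦ t₀^∨, t₁ ↦ t₁, and the central element a = b³ = c² acts by h ↦ t₁^{-1} h t₁. -/

import Mathlib

/-- Defining relations of the universal DAHA of type (C₁∨,C₁).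
Generator indices: 0 = t₀∨, 1 = t₀, 2 = t₁∨, 3 = t₁; index i+4 is the inverse of index i. -/
inductive URel (F : Type) [Field F] :
    FreeAlgebra F (Fin 8) → FreeAlgebra F (Fin 8) → Prop
  | invLeft (i : Fin 4) :
      URel F (FreeAlgebra.ι F (i.castAdd 4) * FreeAlgebra.ι F (i.addNat 4)) 1
  | invRight (i : Fin 4) :
      URel F (FreeAlgebra.ι F (i.addNat 4) * FreeAlgebra.ι F (i.castAdd 4)) 1
  | central (i : Fin 4) (a : FreeAlgebra F (Fin 8)) :
      URel F ((FreeAlgebra.ι F (i.castAdd 4) + FreeAlgebra.ι F (i.addNat 4)) * a)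
             (a * (FreeAlgebra.ι F (i.castAdd 4) + FreeAlgebra.ι F (i.addNat 4)))
  | prodCentral (a : FreeAlgebra F (Fin 8)) :
      URel F ((FreeAlgebra.ι F 0 * FreeAlgebra.ι F 1 * FreeAlgebra.ι F 2 * FreeAlgebra.ι F 3) * a)
             (a * (FreeAlgebra.ι F 0 * FreeAlgebra.ι F 1 * FreeAlgebra.ι F 2 * FreeAlgebra.ι F 3))

/-- The universal double affine Hecke algebra of type (C₁∨,C₁). -/
abbrev UDAHA (F : Type) [Field F] := RingQuot (URel F)

/-- The images of the generators in the UDAHA. -/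
noncomputable def T (F : Type) [Field F] (i : Fin 8) : UDAHA F :=
  RingQuot.mkAlgHom F (URel F) (FreeAlgebra.ι F i)

/-- Relations for Artin's braid group B₃ = ⟨b,c | b³ = c²⟩, generator 0 = b, 1 = c. -/
def B3rels : Set (FreeGroup (Fin 2)) :=
  {FreeGroup.of 0 ^ 3 * (FreeGroup.of 1 ^ 2)⁻¹}

/-- Artin's braid group on three strands. -/
abbrev B3 := PresentedGroup B3rels

namespace UDAHAaux

variable (F : Type) [Field F]

lemma T_mul_inv (i : Fin 4) : T F (i.castAdd 4) * T F (i.addNat 4) = 1 := by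
  have := RingQuot.mkAlgHom_rel F (URel.invLeft (F := F) i)
  simpa [T, map_mul] using this

lemma T_inv_mul (i : Fin 4) : T F (i.addNat 4) * T F (i.castAdd 4) = 1 := by
  have := RingQuot.mkAlgHom_rel F (URel.invRight (F := F) i)
  simpa [T, map_mul] using this

lemma m04 : T F 0 * T F 4 = 1 := T_mul_inv F 0
lemma m40 : T F 4 * T F 0 = 1 := T_inv_mul F 0
lemma m15 : T F 1 * T F 5 = 1 := T_mul_inv F 1
lemma m51 : T F 5 * T F 1 = 1 := T_inv_mul F 1
lemma m26 : T F 2 * T F 6 = 1 := T_mul_inv F 2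
lemma m62 : T F 6 * T F 2 = 1 := T_inv_mul F 2
lemma m37 : T F 3 * T F 7 = 1 := T_mul_inv F 3
lemma m73 : T F 7 * T F 3 = 1 := T_inv_mul F 3

lemma a04 (x : UDAHA F) : T F 0 * (T F 4 * x) = x := by rw [← mul_assoc, m04, one_mul]
lemma a40 (x : UDAHA F) : T F 4 * (T F 0 * x) = x := by rw [← mul_assoc, m40, one_mul]
lemma a15 (x : UDAHA F) : T F 1 * (T F 5 * x) = x := by rw [← mul_assoc, m15, one_mul]
lemma a51 (x : UDAHA F) : T F 5 * (T F 1 * x) = x := by rw [← mul_assoc, m51, one_mul]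
lemma a26 (x : UDAHA F) : T F 2 * (T F 6 * x) = x := by rw [← mul_assoc, m26, one_mul]
lemma a62 (x : UDAHA F) : T F 6 * (T F 2 * x) = x := by rw [← mul_assoc, m62, one_mul]
lemma a37 (x : UDAHA F) : T F 3 * (T F 7 * x) = x := by rw [← mul_assoc, m37, one_mul]
lemma a73 (x : UDAHA F) : T F 7 * (T F 3 * x) = x := by rw [← mul_assoc, m73, one_mul]

lemma central_sum (i : Fin 4) (x : UDAHA F) :
    (T F (i.castAdd 4) + T F (i.addNat 4)) * x = x * (T F (i.castAdd 4) + T F (i.addNat 4)) := by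
  obtain ⟨y, rfl⟩ := RingQuot.mkAlgHom_surjective F (URel F) x
  have := RingQuot.mkAlgHom_rel F (URel.central (F := F) i y)
  simpa [T, map_mul, map_add] using this

lemma c04 (x : UDAHA F) : (T F 0 + T F 4) * x = x * (T F 0 + T F 4) := central_sum F 0 x
lemma c15 (x : UDAHA F) : (T F 1 + T F 5) * x = x * (T F 1 + T F 5) := central_sum F 1 x
lemma c26 (x : UDAHA F) : (T F 2 + T F 6) * x = x * (T F 2 + T F 6) := central_sum F 2 x
lemma c37 (x : UDAHA F) : (T F 3 + T F 7) * x = x * (T F 3 + T F 7) := central_sum F 3 x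

lemma prod_central (x : UDAHA F) :
    (T F 0 * T F 1 * T F 2 * T F 3) * x = x * (T F 0 * T F 1 * T F 2 * T F 3) := by
  obtain ⟨y, rfl⟩ := RingQuot.mkAlgHom_surjective F (URel F) x
  have := RingQuot.mkAlgHom_rel F (URel.prodCentral (F := F) y)
  simpa [T, map_mul] using this

/-- rotation by one: T1 T2 T3 T0 = T0 T1 T2 T3 -/
lemma rot1 : T F 1 * T F 2 * T F 3 * T F 0 = T F 0 * T F 1 * T F 2 * T F 3 := by
  have h := prod_central F (T F 0)
  calc T F 1 * T F 2 * T F 3 * T F 0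
      = T F 4 * ((T F 0 * T F 1 * T F 2 * T F 3) * T F 0) := by
        simp [mul_assoc, a40]
    _ = T F 4 * (T F 0 * (T F 0 * T F 1 * T F 2 * T F 3)) := by rw [h]
    _ = T F 0 * T F 1 * T F 2 * T F 3 := by rw [a40]

lemma rot2 : T F 2 * T F 3 * T F 0 * T F 1 = T F 0 * T F 1 * T F 2 * T F 3 := by
  have h := prod_central F (T F 1)
  calc T F 2 * T F 3 * T F 0 * T F 1
      = T F 5 * ((T F 1 * T F 2 * T F 3 * T F 0) * T F 1) := by
        simp [mul_assoc, a51]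
    _ = T F 5 * ((T F 0 * T F 1 * T F 2 * T F 3) * T F 1) := by rw [rot1]
    _ = T F 5 * (T F 1 * (T F 0 * T F 1 * T F 2 * T F 3)) := by rw [h]
    _ = T F 0 * T F 1 * T F 2 * T F 3 := by rw [a51]

/-- right-assoc rotation rewrite used for γ² -/
lemma rot12 (x : UDAHA F) :
    T F 2 * (T F 3 * (T F 0 * (T F 1 * x))) = T F 1 * (T F 2 * (T F 3 * (T F 0 * x))) := by
  have : T F 2 * T F 3 * T F 0 * T F 1 = T F 1 * T F 2 * T F 3 * T F 0 := by
    rw [rot1, rot2]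
  calc T F 2 * (T F 3 * (T F 0 * (T F 1 * x)))
      = (T F 2 * T F 3 * T F 0 * T F 1) * x := by simp [mul_assoc]
    _ = (T F 1 * T F 2 * T F 3 * T F 0) * x := by rw [this]
    _ = T F 1 * (T F 2 * (T F 3 * (T F 0 * x))) := by simp [mul_assoc]

end UDAHAaux

namespace UDAHAaux

variable (F : Type) [Field F]

/-- sandwich: u s w + u t w = s + t when s+t central and u w = 1 -/
lemma sandwich (u w s t : UDAHA F) (hc : ∀ x, (s + t) * x = x * (s + t)) (h1 : u * w = 1) :
    u * s * w + u * t * w = s + t := by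
  have h2 : u * s * w + u * t * w = u * ((s + t) * w) := by noncomm_ring
  rw [h2, hc w, ← mul_assoc, h1, one_mul]

lemma aci (i : Fin 4) (x : UDAHA F) : T F (i.castAdd 4) * (T F (i.addNat 4) * x) = x := by
  rw [← mul_assoc, T_mul_inv, one_mul]

lemma aic (i : Fin 4) (x : UDAHA F) : T F (i.addNat 4) * (T F (i.castAdd 4) * x) = x := by
  rw [← mul_assoc, T_inv_mul, one_mul]

/-- β generator images -/
noncomputable def fβ : Fin 8 → UDAHA F := fun i =>
  if i = 0 then T F 7 * T F 2 * T F 3 else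
  if i = 1 then T F 0 else if i = 2 then T F 1 else if i = 3 then T F 3 else
  if i = 4 then T F 7 * T F 6 * T F 3 else
  if i = 5 then T F 4 else if i = 6 then T F 5 else T F 7

/-- β⁻¹ generator images -/
noncomputable def fβi : Fin 8 → UDAHA F := fun i =>
  if i = 0 then T F 1 else if i = 1 then T F 2 else
  if i = 2 then T F 3 * T F 0 * T F 7 else if i = 3 then T F 3 else
  if i = 4 then T F 5 else if i = 5 then T F 6 else
  if i = 6 then T F 3 * T F 4 * T F 7 else T F 7

/-- γ generator images -/
noncomputable def fγ : Fin 8 → UDAHA F := fun i =>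
  if i = 0 then T F 7 * T F 2 * T F 3 else
  if i = 1 then T F 0 * T F 1 * T F 4 else
  if i = 2 then T F 0 else if i = 3 then T F 3 else
  if i = 4 then T F 7 * T F 6 * T F 3 else
  if i = 5 then T F 0 * T F 5 * T F 4 else
  if i = 6 then T F 4 else T F 7

/-- γ⁻¹ generator images -/
noncomputable def fγi : Fin 8 → UDAHA F := fun i =>
  if i = 0 then T F 2 else if i = 1 then T F 6 * T F 1 * T F 2 else
  if i = 2 then T F 3 * T F 0 * T F 7 else if i = 3 then T F 3 else
  if i = 4 then T F 6 else if i = 5 then T F 6 * T F 5 * T F 2 else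
  if i = 6 then T F 3 * T F 4 * T F 7 else T F 7

/-- conjugation by t₁ generator images -/
noncomputable def fκ : Fin 8 → UDAHA F := fun i => T F 7 * T F i * T F 3

end UDAHAaux

namespace UDAHAaux

variable (F : Type) [Field F]

lemma fin4cases (i : Fin 4) : i = 0 ∨ i = 1 ∨ i = 2 ∨ i = 3 := by revert i; decide

lemma ic0 : Fin.castAdd (n := 4) 4 (0 : Fin 4) = (0 : Fin 8) := rfl
lemma ic1 : Fin.castAdd (n := 4) 4 (1 : Fin 4) = (1 : Fin 8) := rfl
lemma ic2 : Fin.castAdd (n := 4) 4 (2 : Fin 4) = (2 : Fin 8) := rfl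
lemma ic3 : Fin.castAdd (n := 4) 4 (3 : Fin 4) = (3 : Fin 8) := rfl
lemma ia0 : Fin.addNat (0 : Fin 4) 4 = (4 : Fin 8) := rfl
lemma ia1 : Fin.addNat (1 : Fin 4) 4 = (5 : Fin 8) := rfl
lemma ia2 : Fin.addNat (2 : Fin 4) 4 = (6 : Fin 8) := rfl
lemma ia3 : Fin.addNat (3 : Fin 4) 4 = (7 : Fin 8) := rfl

end UDAHAaux

namespace UDAHAaux

variable (F : Type) [Field F]

section
set_option maxHeartbeats 1000000

lemma hβ : ∀ ⦃x y⦄, URel F x y →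
    (FreeAlgebra.lift F (fβ F)) x = (FreeAlgebra.lift F (fβ F)) y := by
  intro x y r
  induction r with
  | invLeft i =>
    rcases fin4cases i with rfl | rfl | rfl | rfl <;>
    · simp only [map_mul, map_one, FreeAlgebra.lift_ι_apply, ic0, ic1, ic2, ic3,
        ia0, ia1, ia2, ia3]
      simp [fβ, mul_assoc, a04 F, a40 F, a15 F, a51 F, a26 F, a62 F,
        a37 F, a73 F, m04 F, m40 F, m15 F, m51 F, m26 F, m62 F, m37 F, m73 F]
  | invRight i =>
    rcases fin4cases i with rfl | rfl | rfl | rfl <;>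
    · simp only [map_mul, map_one, FreeAlgebra.lift_ι_apply, ic0, ic1, ic2, ic3,
        ia0, ia1, ia2, ia3]
      simp [fβ, mul_assoc, a04 F, a40 F, a15 F, a51 F, a26 F, a62 F,
        a37 F, a73 F, m04 F, m40 F, m15 F, m51 F, m26 F, m62 F, m37 F, m73 F]
  | central i a =>
    rcases fin4cases i with rfl | rfl | rfl | rfl
    · simp only [map_mul, map_add, FreeAlgebra.lift_ι_apply, ic0, ia0]
      simp only [fβ, Fin.reduceEq, reduceIte]
      rw [sandwich F (T F 7) (T F 3) (T F 2) (T F 6) (c26 F) (m73 F)]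
      exact c26 F _
    · simp only [map_mul, map_add, FreeAlgebra.lift_ι_apply, ic1, ia1]
      simp only [fβ, Fin.reduceEq, reduceIte]
      exact c04 F _
    · simp only [map_mul, map_add, FreeAlgebra.lift_ι_apply, ic2, ia2]
      simp only [fβ, Fin.reduceEq, reduceIte]
      exact c15 F _
    · simp only [map_mul, map_add, FreeAlgebra.lift_ι_apply, ic3, ia3]
      simp only [fβ, Fin.reduceEq, reduceIte]
      exact c37 F _
  | prodCentral a =>
    simp only [map_mul, FreeAlgebra.lift_ι_apply]
    simp only [fβ, Fin.reduceEq, reduceIte]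
    have hP : T F 7 * T F 2 * T F 3 * T F 0 * T F 1 * T F 3
        = T F 0 * T F 1 * T F 2 * T F 3 := by
      have h1 : T F 7 * T F 2 * T F 3 * T F 0 * T F 1 * T F 3
          = T F 7 * (T F 2 * T F 3 * T F 0 * T F 1 * T F 3) := by simp [mul_assoc]
      have h2 : T F 2 * T F 3 * T F 0 * T F 1 * T F 3
          = T F 0 * T F 1 * T F 2 * T F 3 * T F 3 := by rw [rot2]
      rw [h1, h2, prod_central F (T F 3), ← mul_assoc, m73, one_mul]
    rw [hP]
    exact prod_central F _

end

end UDAHAaux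

namespace UDAHAaux

variable (F : Type) [Field F]

section
set_option maxHeartbeats 1000000

lemma hβi : ∀ ⦃x y⦄, URel F x y →
    (FreeAlgebra.lift F (fβi F)) x = (FreeAlgebra.lift F (fβi F)) y := by
  intro x y r
  induction r with
  | invLeft i =>
    rcases fin4cases i with rfl | rfl | rfl | rfl <;>
    · simp only [map_mul, map_one, FreeAlgebra.lift_ι_apply, ic0, ic1, ic2, ic3,
        ia0, ia1, ia2, ia3]
      simp [fβi, mul_assoc, a04 F, a40 F, a15 F, a51 F, a26 F, a62 F,
        a37 F, a73 F, m04 F, m40 F, m15 F, m51 F, m26 F, m62 F, m37 F, m73 F]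
  | invRight i =>
    rcases fin4cases i with rfl | rfl | rfl | rfl <;>
    · simp only [map_mul, map_one, FreeAlgebra.lift_ι_apply, ic0, ic1, ic2, ic3,
        ia0, ia1, ia2, ia3]
      simp [fβi, mul_assoc, a04 F, a40 F, a15 F, a51 F, a26 F, a62 F,
        a37 F, a73 F, m04 F, m40 F, m15 F, m51 F, m26 F, m62 F, m37 F, m73 F]
  | central i a =>
    rcases fin4cases i with rfl | rfl | rfl | rfl
    · simp only [map_mul, map_add, FreeAlgebra.lift_ι_apply, ic0, ia0]
      simp only [fβi, Fin.reduceEq, reduceIte]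
      exact c15 F _
    · simp only [map_mul, map_add, FreeAlgebra.lift_ι_apply, ic1, ia1]
      simp only [fβi, Fin.reduceEq, reduceIte]
      exact c26 F _
    · simp only [map_mul, map_add, FreeAlgebra.lift_ι_apply, ic2, ia2]
      simp only [fβi, Fin.reduceEq, reduceIte]
      rw [sandwich F (T F 3) (T F 7) (T F 0) (T F 4) (c04 F) (m37 F)]
      exact c04 F _
    · simp only [map_mul, map_add, FreeAlgebra.lift_ι_apply, ic3, ia3]
      simp only [fβi, Fin.reduceEq, reduceIte]
      exact c37 F _
  | prodCentral a =>
    simp only [map_mul, FreeAlgebra.lift_ι_apply]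
    simp only [fβi, Fin.reduceEq, reduceIte]
    have hP : T F 1 * T F 2 * (T F 3 * T F 0 * T F 7) * T F 3
        = T F 0 * T F 1 * T F 2 * T F 3 := by
      have h1 : T F 1 * T F 2 * (T F 3 * T F 0 * T F 7) * T F 3
          = T F 1 * T F 2 * T F 3 * T F 0 * (T F 7 * T F 3) := by simp [mul_assoc]
      rw [h1, m73, mul_one, rot1]
    rw [hP]
    exact prod_central F _

lemma hγ : ∀ ⦃x y⦄, URel F x y →
    (FreeAlgebra.lift F (fγ F)) x = (FreeAlgebra.lift F (fγ F)) y := by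
  intro x y r
  induction r with
  | invLeft i =>
    rcases fin4cases i with rfl | rfl | rfl | rfl <;>
    · simp only [map_mul, map_one, FreeAlgebra.lift_ι_apply, ic0, ic1, ic2, ic3,
        ia0, ia1, ia2, ia3]
      simp [fγ, mul_assoc, a04 F, a40 F, a15 F, a51 F, a26 F, a62 F,
        a37 F, a73 F, m04 F, m40 F, m15 F, m51 F, m26 F, m62 F, m37 F, m73 F]
  | invRight i =>
    rcases fin4cases i with rfl | rfl | rfl | rfl <;>
    · simp only [map_mul, map_one, FreeAlgebra.lift_ι_apply, ic0, ic1, ic2, ic3,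
        ia0, ia1, ia2, ia3]
      simp [fγ, mul_assoc, a04 F, a40 F, a15 F, a51 F, a26 F, a62 F,
        a37 F, a73 F, m04 F, m40 F, m15 F, m51 F, m26 F, m62 F, m37 F, m73 F]
  | central i a =>
    rcases fin4cases i with rfl | rfl | rfl | rfl
    · simp only [map_mul, map_add, FreeAlgebra.lift_ι_apply, ic0, ia0]
      simp only [fγ, Fin.reduceEq, reduceIte]
      rw [sandwich F (T F 7) (T F 3) (T F 2) (T F 6) (c26 F) (m73 F)]
      exact c26 F _
    · simp only [map_mul, map_add, FreeAlgebra.lift_ι_apply, ic1, ia1]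
      simp only [fγ, Fin.reduceEq, reduceIte]
      rw [sandwich F (T F 0) (T F 4) (T F 1) (T F 5) (c15 F) (m04 F)]
      exact c15 F _
    · simp only [map_mul, map_add, FreeAlgebra.lift_ι_apply, ic2, ia2]
      simp only [fγ, Fin.reduceEq, reduceIte]
      exact c04 F _
    · simp only [map_mul, map_add, FreeAlgebra.lift_ι_apply, ic3, ia3]
      simp only [fγ, Fin.reduceEq, reduceIte]
      exact c37 F _
  | prodCentral a =>
    simp only [map_mul, FreeAlgebra.lift_ι_apply]
    simp only [fγ, Fin.reduceEq, reduceIte]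
    have hP : T F 7 * T F 2 * T F 3 * (T F 0 * T F 1 * T F 4) * T F 0 * T F 3
        = T F 0 * T F 1 * T F 2 * T F 3 := by
      have h1 : T F 7 * T F 2 * T F 3 * (T F 0 * T F 1 * T F 4) * T F 0 * T F 3
          = T F 7 * (T F 2 * T F 3 * T F 0 * T F 1 * T F 3) := by
        simp [mul_assoc, a40 F]
      have h2 : T F 2 * T F 3 * T F 0 * T F 1 * T F 3
          = T F 0 * T F 1 * T F 2 * T F 3 * T F 3 := by rw [rot2]
      rw [h1, h2, prod_central F (T F 3), ← mul_assoc, m73, one_mul]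
    rw [hP]
    exact prod_central F _

lemma hγi : ∀ ⦃x y⦄, URel F x y →
    (FreeAlgebra.lift F (fγi F)) x = (FreeAlgebra.lift F (fγi F)) y := by
  intro x y r
  induction r with
  | invLeft i =>
    rcases fin4cases i with rfl | rfl | rfl | rfl <;>
    · simp only [map_mul, map_one, FreeAlgebra.lift_ι_apply, ic0, ic1, ic2, ic3,
        ia0, ia1, ia2, ia3]
      simp [fγi, mul_assoc, a04 F, a40 F, a15 F, a51 F, a26 F, a62 F,
        a37 F, a73 F, m04 F, m40 F, m15 F, m51 F, m26 F, m62 F, m37 F, m73 F]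
  | invRight i =>
    rcases fin4cases i with rfl | rfl | rfl | rfl <;>
    · simp only [map_mul, map_one, FreeAlgebra.lift_ι_apply, ic0, ic1, ic2, ic3,
        ia0, ia1, ia2, ia3]
      simp [fγi, mul_assoc, a04 F, a40 F, a15 F, a51 F, a26 F, a62 F,
        a37 F, a73 F, m04 F, m40 F, m15 F, m51 F, m26 F, m62 F, m37 F, m73 F]
  | central i a =>
    rcases fin4cases i with rfl | rfl | rfl | rfl
    · simp only [map_mul, map_add, FreeAlgebra.lift_ι_apply, ic0, ia0]
      simp only [fγi, Fin.reduceEq, reduceIte]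
      exact c26 F _
    · simp only [map_mul, map_add, FreeAlgebra.lift_ι_apply, ic1, ia1]
      simp only [fγi, Fin.reduceEq, reduceIte]
      rw [sandwich F (T F 6) (T F 2) (T F 1) (T F 5) (c15 F) (m62 F)]
      exact c15 F _
    · simp only [map_mul, map_add, FreeAlgebra.lift_ι_apply, ic2, ia2]
      simp only [fγi, Fin.reduceEq, reduceIte]
      rw [sandwich F (T F 3) (T F 7) (T F 0) (T F 4) (c04 F) (m37 F)]
      exact c04 F _
    · simp only [map_mul, map_add, FreeAlgebra.lift_ι_apply, ic3, ia3]
      simp only [fγi, Fin.reduceEq, reduceIte]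
      exact c37 F _
  | prodCentral a =>
    simp only [map_mul, FreeAlgebra.lift_ι_apply]
    simp only [fγi, Fin.reduceEq, reduceIte]
    have hP : T F 2 * (T F 6 * T F 1 * T F 2) * (T F 3 * T F 0 * T F 7) * T F 3
        = T F 0 * T F 1 * T F 2 * T F 3 := by
      have h1 : T F 2 * (T F 6 * T F 1 * T F 2) * (T F 3 * T F 0 * T F 7) * T F 3
          = T F 1 * T F 2 * T F 3 * T F 0 := by
        simp [mul_assoc, a26 F, m73 F]
      rw [h1, rot1]
    rw [hP]
    exact prod_central F _

lemma hκ : ∀ ⦃x y⦄, URel F x y →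
    (FreeAlgebra.lift F (fκ F)) x = (FreeAlgebra.lift F (fκ F)) y := by
  intro x y r
  induction r with
  | invLeft i =>
    simp only [map_mul, map_one, FreeAlgebra.lift_ι_apply, fκ]
    simp [mul_assoc, a37 F, aci F, m73 F]
  | invRight i =>
    simp only [map_mul, map_one, FreeAlgebra.lift_ι_apply, fκ]
    simp [mul_assoc, a37 F, aic F, m73 F]
  | central i a =>
    simp only [map_mul, map_add, FreeAlgebra.lift_ι_apply, fκ]
    rw [sandwich F (T F 7) (T F 3) (T F (i.castAdd 4)) (T F (i.addNat 4))
      (central_sum F i) (m73 F)]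
    exact central_sum F i _
  | prodCentral a =>
    simp only [map_mul, FreeAlgebra.lift_ι_apply, fκ]
    have hP : T F 7 * T F 0 * T F 3 * (T F 7 * T F 1 * T F 3) * (T F 7 * T F 2 * T F 3)
          * (T F 7 * T F 3 * T F 3)
        = T F 0 * T F 1 * T F 2 * T F 3 := by
      have h1 : T F 7 * T F 0 * T F 3 * (T F 7 * T F 1 * T F 3) * (T F 7 * T F 2 * T F 3)
            * (T F 7 * T F 3 * T F 3)
          = T F 7 * (T F 0 * T F 1 * T F 2 * T F 3 * T F 3) := by
        simp [mul_assoc, a37 F]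
      rw [h1, prod_central F (T F 3), ← mul_assoc, m73, one_mul]
    rw [hP]
    exact prod_central F _

end

end UDAHAaux

namespace UDAHAaux

variable (F : Type) [Field F]

noncomputable def mkH (f : Fin 8 → UDAHA F)
    (h : ∀ ⦃x y⦄, URel F x y → FreeAlgebra.lift F f x = FreeAlgebra.lift F f y) :
    UDAHA F →ₐ[F] UDAHA F :=
  RingQuot.liftAlgHom F ⟨FreeAlgebra.lift F f, h⟩

lemma mkH_T (f : Fin 8 → UDAHA F)
    (h : ∀ ⦃x y⦄, URel F x y → FreeAlgebra.lift F f x = FreeAlgebra.lift F f y) (i : Fin 8) :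
    mkH F f h (T F i) = f i := by
  rw [T, mkH, RingQuot.liftAlgHom_mkAlgHom_apply, FreeAlgebra.lift_ι_apply]

lemma hom_ext4 (f g : UDAHA F →ₐ[F] UDAHA F)
    (h0 : f (T F 0) = g (T F 0)) (h1 : f (T F 1) = g (T F 1))
    (h2 : f (T F 2) = g (T F 2)) (h3 : f (T F 3) = g (T F 3)) : f = g := by
  have key : ∀ i : Fin 4, f (T F (i.castAdd 4)) = g (T F (i.castAdd 4)) →
      f (T F (i.addNat 4)) = g (T F (i.addNat 4)) := by
    intro i hc
    have hf : g (T F (i.castAdd 4)) * f (T F (i.addNat 4)) = 1 := by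
      rw [← hc, ← map_mul, T_mul_inv, map_one]
    have hg : g (T F (i.addNat 4)) * g (T F (i.castAdd 4)) = 1 := by
      rw [← map_mul, T_inv_mul, map_one]
    exact (left_inv_eq_right_inv hg hf).symm
  apply RingQuot.ringQuot_ext'
  apply FreeAlgebra.hom_ext
  funext i
  simp only [Function.comp_apply, AlgHom.coe_comp, AlgHom.comp_apply]
  rcases (by revert i; decide :
      i = 0 ∨ i = 1 ∨ i = 2 ∨ i = 3 ∨ i = 4 ∨ i = 5 ∨ i = 6 ∨ i = 7) with
    rfl | rfl | rfl | rfl | rfl | rfl | rfl | rfl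
  · exact h0
  · exact h1
  · exact h2
  · exact h3
  · exact key 0 h0
  · exact key 1 h1
  · exact key 2 h2
  · exact key 3 h3

end UDAHAaux

namespace UDAHAaux

variable (F : Type) [Field F]

noncomputable def βA : UDAHA F →ₐ[F] UDAHA F := mkH F (fβ F) (hβ F)
noncomputable def βAi : UDAHA F →ₐ[F] UDAHA F := mkH F (fβi F) (hβi F)
noncomputable def γA : UDAHA F →ₐ[F] UDAHA F := mkH F (fγ F) (hγ F)
noncomputable def γAi : UDAHA F →ₐ[F] UDAHA F := mkH F (fγi F) (hγi F)
noncomputable def κA : UDAHA F →ₐ[F] UDAHA F := mkH F (fκ F) (hκ F)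

section
set_option maxHeartbeats 1000000

lemma βA_comp : (βA F).comp (βAi F) = AlgHom.id F (UDAHA F) := by
  apply hom_ext4 <;>
  simp [βA, βAi, mkH_T, fβ, fβi, map_mul, mul_assoc,
    a04 F, a40 F, a15 F, a51 F, a26 F, a62 F, a37 F, a73 F,
    m04 F, m40 F, m15 F, m51 F, m26 F, m62 F, m37 F, m73 F]

lemma βAi_comp : (βAi F).comp (βA F) = AlgHom.id F (UDAHA F) := by
  apply hom_ext4 <;>
  simp [βA, βAi, mkH_T, fβ, fβi, map_mul, mul_assoc,
    a04 F, a40 F, a15 F, a51 F, a26 F, a62 F, a37 F, a73 F,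
    m04 F, m40 F, m15 F, m51 F, m26 F, m62 F, m37 F, m73 F]

lemma γA_comp : (γA F).comp (γAi F) = AlgHom.id F (UDAHA F) := by
  apply hom_ext4 <;>
  simp [γA, γAi, mkH_T, fγ, fγi, map_mul, mul_assoc,
    a04 F, a40 F, a15 F, a51 F, a26 F, a62 F, a37 F, a73 F,
    m04 F, m40 F, m15 F, m51 F, m26 F, m62 F, m37 F, m73 F]

lemma γAi_comp : (γAi F).comp (γA F) = AlgHom.id F (UDAHA F) := by
  apply hom_ext4 <;>
  simp [γA, γAi, mkH_T, fγ, fγi, map_mul, mul_assoc,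
    a04 F, a40 F, a15 F, a51 F, a26 F, a62 F, a37 F, a73 F,
    m04 F, m40 F, m15 F, m51 F, m26 F, m62 F, m37 F, m73 F]

lemma βA_cube : (βA F).comp ((βA F).comp (βA F)) = κA F := by
  apply hom_ext4 <;>
  simp [βA, κA, mkH_T, fβ, fκ, map_mul, mul_assoc,
    a04 F, a40 F, a15 F, a51 F, a26 F, a62 F, a37 F, a73 F,
    m04 F, m40 F, m15 F, m51 F, m26 F, m62 F, m37 F, m73 F]

lemma γA_sq : (γA F).comp (γA F) = κA F := by
  apply hom_ext4 <;>
  simp [γA, κA, mkH_T, fγ, fκ, map_mul, mul_assoc, rot12 F,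
    a04 F, a40 F, a15 F, a51 F, a26 F, a62 F, a37 F, a73 F,
    m04 F, m40 F, m15 F, m51 F, m26 F, m62 F, m37 F, m73 F]

end

lemma κA_apply (x : UDAHA F) : κA F x = T F 7 * x * T F 3 := by
  obtain ⟨y, rfl⟩ := RingQuot.mkAlgHom_surjective F (URel F) x
  induction y using FreeAlgebra.induction with
  | grade0 r =>
    rw [AlgHom.commutes, AlgHom.commutes]
    rw [show T F 7 * algebraMap F (UDAHA F) r = algebraMap F (UDAHA F) r * T F 7 from
      (Algebra.commutes r (T F 7)).symm, mul_assoc, m73, mul_one]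
  | grade1 i =>
    rw [show (RingQuot.mkAlgHom F (URel F)) (FreeAlgebra.ι F i) = T F i from rfl]
    rw [κA, mkH_T]
    rfl
  | mul a b ha hb =>
    rw [map_mul, map_mul, ha, hb]
    simp [mul_assoc, a37 F]
  | add a b ha hb =>
    rw [map_add, map_add, ha, hb]
    simp [mul_add, add_mul]

noncomputable def βE : UDAHA F ≃ₐ[F] UDAHA F :=
  AlgEquiv.ofAlgHom (βA F) (βAi F) (βA_comp F) (βAi_comp F)

noncomputable def γE : UDAHA F ≃ₐ[F] UDAHA F :=
  AlgEquiv.ofAlgHom (γA F) (γAi F) (γA_comp F) (γAi_comp F)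

lemma βE_apply (x : UDAHA F) : βE F x = βA F x := rfl
lemma γE_apply (x : UDAHA F) : γE F x = γA F x := rfl

lemma βE_cube_apply (x : UDAHA F) : (βE F ^ 3) x = T F 7 * x * T F 3 := by
  have h1 : (βE F ^ 3) x = βA F (βA F (βA F x)) := by
    rw [pow_succ, pow_succ, pow_one, AlgEquiv.mul_apply, AlgEquiv.mul_apply]
    rfl
  rw [h1, show βA F (βA F (βA F x)) = ((βA F).comp ((βA F).comp (βA F))) x from rfl,
    βA_cube, κA_apply]

lemma γE_sq_apply (x : UDAHA F) : (γE F ^ 2) x = T F 7 * x * T F 3 := by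
  have h1 : (γE F ^ 2) x = γA F (γA F x) := by
    rw [pow_two, AlgEquiv.mul_apply]
    rfl
  rw [h1, show γA F (γA F x) = ((γA F).comp (γA F)) x from rfl, γA_sq, κA_apply]

lemma cube_eq_sq : βE F ^ 3 = γE F ^ 2 := by
  apply AlgEquiv.ext
  intro x
  rw [βE_cube_apply, γE_sq_apply]

end UDAHAaux

open UDAHAaux in
theorem stmt_13 (F : Type) [Field F] :
    ∃ ρ : B3 →* (UDAHA F ≃ₐ[F] UDAHA F),
      (ρ (PresentedGroup.of 0)) (T F 0) = T F 7 * T F 2 * T F 3 ∧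
      (ρ (PresentedGroup.of 0)) (T F 1) = T F 0 ∧
      (ρ (PresentedGroup.of 0)) (T F 2) = T F 1 ∧
      (ρ (PresentedGroup.of 0)) (T F 3) = T F 3 ∧
      (ρ (PresentedGroup.of 1)) (T F 0) = T F 7 * T F 2 * T F 3 ∧
      (ρ (PresentedGroup.of 1)) (T F 1) = T F 0 * T F 1 * T F 4 ∧
      (ρ (PresentedGroup.of 1)) (T F 2) = T F 0 ∧
      (ρ (PresentedGroup.of 1)) (T F 3) = T F 3 ∧
      (∀ h : UDAHA F, (ρ (PresentedGroup.of 0 ^ 3)) h = T F 7 * h * T F 3) := by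
  have hr : ∀ r ∈ B3rels, FreeGroup.lift (fun j : Fin 2 => if j = 0 then βE F else γE F) r = 1 := by
    intro r hrr
    rw [B3rels, Set.mem_singleton_iff] at hrr
    subst hrr
    simp only [map_mul, map_pow, map_inv, FreeGroup.lift_apply_of, Fin.reduceEq, reduceIte,
      if_pos rfl]
    rw [cube_eq_sq F, mul_inv_cancel]
  refine ⟨PresentedGroup.toGroup hr, ?_, ?_, ?_, ?_, ?_, ?_, ?_, ?_, ?_⟩
  all_goals
    try rw [show (PresentedGroup.toGroup hr) (PresentedGroup.of 0)
          = βE F by rw [PresentedGroup.toGroup.of]; norm_num]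
  · rw [βE_apply, βA, mkH_T]; simp [fβ]
  · rw [βE_apply, βA, mkH_T]; simp [fβ]
  · rw [βE_apply, βA, mkH_T]; simp [fβ]
  · rw [βE_apply, βA, mkH_T]; simp [fβ]
  · rw [show (PresentedGroup.toGroup hr) (PresentedGroup.of 1) = γE F by
      rw [PresentedGroup.toGroup.of]; norm_num]
    rw [γE_apply, γA, mkH_T]; simp [fγ]
  · rw [show (PresentedGroup.toGroup hr) (PresentedGroup.of 1) = γE F by
      rw [PresentedGroup.toGroup.of]; norm_num]
    rw [γE_apply, γA, mkH_T]; simp [fγ]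
  · rw [show (PresentedGroup.toGroup hr) (PresentedGroup.of 1) = γE F by
      rw [PresentedGroup.toGroup.of]; norm_num]
    rw [γE_apply, γA, mkH_T]; simp [fγ]
  · rw [show (PresentedGroup.toGroup hr) (PresentedGroup.of 1) = γE F by
      rw [PresentedGroup.toGroup.of]; norm_num]
    rw [γE_apply, γA, mkH_T]; simp [fγ]
  · intro h
    rw [map_pow, show (PresentedGroup.toGroup hr) (PresentedGroup.of 0) = βE F by
      rw [PresentedGroup.toGroup.of]; norm_num]
    rw [βE_cube_apply]
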